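/- For every real c > 0 and every real y with 0 < y < 1, the inequality (e^{4cy}-1)(e^{4c(1-y)}-1) / (2c·y(1-y)(e^{4c}-1)) < 2 holds; equivalently ((e^{4cy}-1)/y)·((e^{4c(1-y)}-1)/(1-y)) < 4c(e^{4c}-1). -/

import Mathlib

private lemma H1_pos {b : ℝ} (hb : 0 < b) : 0 < (b - 1) * Real.exp b + 1 := by
  have key : StrictMonoOn (fun x : ℝ => (x - 1) * Real.exp x + 1) (Set.Ici 0) := by
    apply strictMonoOn_of_deriv_pos (convex_Ici 0)
    · fun_prop
    · intro x hx
      simp only [interior_Ici, Set.mem_Ioi] at hx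
      have h : HasDerivAt (fun x : ℝ => (x - 1) * Real.exp x + 1) (x * Real.exp x) x := by
        have := (((hasDerivAt_id x).sub_const 1).mul (Real.hasDerivAt_exp x)).add_const 1
        exact this.congr_deriv (by simp only [id_eq]; ring)
      rw [h.deriv]
      exact mul_pos hx (Real.exp_pos x)
  have := key Set.self_mem_Ici (Set.mem_Ici.2 hb.le) hb
  simpa using this

private lemma H_pos {b : ℝ} (hb : 0 < b) : 0 < (b - 2) * Real.exp b + b + 2 := by
  have key : StrictMonoOn (fun x : ℝ => (x - 2) * Real.exp x + x + 2) (Set.Ici 0) := by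
    apply strictMonoOn_of_deriv_pos (convex_Ici 0)
    · fun_prop
    · intro x hx
      simp only [interior_Ici, Set.mem_Ioi] at hx
      have h : HasDerivAt (fun x : ℝ => (x - 2) * Real.exp x + x + 2)
          ((x - 1) * Real.exp x + 1) x := by
        have := ((((hasDerivAt_id x).sub_const 2).mul (Real.hasDerivAt_exp x)).add
          (hasDerivAt_id x)).add_const 2
        exact this.congr_deriv (by simp only [id_eq]; ring)
      rw [h.deriv]
      exact H1_pos hx
  have := key Set.self_mem_Ici (Set.mem_Ici.2 hb.le) hb
  simpa using this

private lemma key_ineq {a b : ℝ} (ha : 0 < a) (hb : 0 < b) :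
    (a + b) * (Real.exp a - 1) * (Real.exp b - 1) < a * b * (Real.exp (a + b) - 1) := by
  set F1 : ℝ → ℝ := fun x =>
    b * (Real.exp (x + b) - 1) + x * b * Real.exp (x + b)
      - ((Real.exp x - 1) + (x + b) * Real.exp x) * (Real.exp b - 1) with hF1def
  -- derivative of F1
  have hF1deriv : ∀ x : ℝ, HasDerivAt F1
      (Real.exp x * (((b - 2) * Real.exp b + b + 2) + x * ((b - 1) * Real.exp b + 1))) x := by
    intro x
    have he : HasDerivAt (fun x : ℝ => Real.exp (x + b)) (Real.exp (x + b)) x := by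
      have := ((hasDerivAt_id x).add_const b).exp
      simpa using this
    have h1 : HasDerivAt (fun x : ℝ => b * (Real.exp (x + b) - 1)) (b * Real.exp (x + b)) x := by
      have := (he.sub_const 1).const_mul b
      simpa using this
    have h2 : HasDerivAt (fun x : ℝ => x * b * Real.exp (x + b))
        (b * Real.exp (x + b) + x * b * Real.exp (x + b)) x := by
      have := (((hasDerivAt_id x).mul_const b).mul he)
      exact this.congr_deriv (by simp only [id_eq]; ring)
    have h3 : HasDerivAt (fun x : ℝ => ((Real.exp x - 1) + (x + b) * Real.exp x) * (Real.exp b - 1))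
        ((Real.exp x + (Real.exp x + (x + b) * Real.exp x)) * (Real.exp b - 1)) x := by
      have hinner : HasDerivAt (fun x : ℝ => (Real.exp x - 1) + (x + b) * Real.exp x)
          (Real.exp x + (Real.exp x + (x + b) * Real.exp x)) x := by
        have := ((Real.hasDerivAt_exp x).sub_const 1).add
          (((hasDerivAt_id x).add_const b).mul (Real.hasDerivAt_exp x))
        exact this.congr_deriv (by simp only [id_eq]; ring)
      exact hinner.mul_const _
    have := (h1.add h2).sub h3
    exact this.congr_deriv (by rw [Real.exp_add]; ring)
  -- F1 is strictly monotone on Ici 0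
  have hF1mono : StrictMonoOn F1 (Set.Ici 0) := by
    apply strictMonoOn_of_deriv_pos (convex_Ici 0)
    · rw [hF1def]; fun_prop
    · intro x hx
      simp only [interior_Ici, Set.mem_Ioi] at hx
      rw [(hF1deriv x).deriv]
      have := H_pos hb
      have := H1_pos hb
      have := Real.exp_pos x
      positivity
  -- F1 0 = 0, so F1 x > 0 for x > 0
  have hF10 : F1 0 = 0 := by simp [hF1def]
  have hF1pos : ∀ x : ℝ, 0 < x → 0 < F1 x := by
    intro x hx
    have := hF1mono Set.self_mem_Ici (Set.mem_Ici.2 hx.le) hx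
    rwa [hF10] at this
  -- now F
  set F : ℝ → ℝ := fun x =>
    x * b * (Real.exp (x + b) - 1) - (x + b) * (Real.exp x - 1) * (Real.exp b - 1) with hFdef
  have hFderiv : ∀ x : ℝ, HasDerivAt F (F1 x) x := by
    intro x
    have he : HasDerivAt (fun x : ℝ => Real.exp (x + b)) (Real.exp (x + b)) x := by
      have := ((hasDerivAt_id x).add_const b).exp
      simpa using this
    have h1 : HasDerivAt (fun x : ℝ => x * b * (Real.exp (x + b) - 1))
        (b * (Real.exp (x + b) - 1) + x * b * Real.exp (x + b)) x := by
      have := ((hasDerivAt_id x).mul_const b).mul (he.sub_const 1)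
      exact this.congr_deriv (by simp only [id_eq]; ring)
    have h2 : HasDerivAt (fun x : ℝ => (x + b) * (Real.exp x - 1) * (Real.exp b - 1))
        (((Real.exp x - 1) + (x + b) * Real.exp x) * (Real.exp b - 1)) x := by
      have hinner : HasDerivAt (fun x : ℝ => (x + b) * (Real.exp x - 1))
          ((Real.exp x - 1) + (x + b) * Real.exp x) x := by
        have := ((hasDerivAt_id x).add_const b).mul ((Real.hasDerivAt_exp x).sub_const 1)
        exact this.congr_deriv (by simp only [id_eq]; ring)
      have := hinner.mul_const (Real.exp b - 1)
      convert this using 1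
    exact h1.sub h2
  have hFmono : StrictMonoOn F (Set.Ici 0) := by
    apply strictMonoOn_of_deriv_pos (convex_Ici 0)
    · rw [hFdef]; fun_prop
    · intro x hx
      simp only [interior_Ici, Set.mem_Ioi] at hx
      rw [(hFderiv x).deriv]
      exact hF1pos x hx
  have hF0 : F 0 = 0 := by simp [hFdef]
  have := hFmono Set.self_mem_Ici (Set.mem_Ici.2 ha.le) ha
  rw [hF0, hFdef] at this
  simp only at this
  linarith

/-- For `c > 0` and `0 < y < 1`,
`(e^{4cy}-1)(e^{4c(1-y)}-1) / (2c·y(1-y)(e^{4c}-1)) < 2`. -/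
theorem stmt2 (c y : ℝ) (hc : 0 < c) (h0 : 0 < y) (h1 : y < 1) :
    (Real.exp (4 * c * y) - 1) * (Real.exp (4 * c * (1 - y)) - 1) /
        (2 * c * y * (1 - y) * (Real.exp (4 * c) - 1)) < 2 := by
  have ha : 0 < 4 * c * y := by positivity
  have hb : 0 < 4 * c * (1 - y) := by
    have : 0 < 1 - y := by linarith
    positivity
  have hexp : 1 < Real.exp (4 * c) := by
    rw [show (1 : ℝ) = Real.exp 0 by simp]
    exact Real.exp_lt_exp.2 (by positivity)
  have hD : 0 < 2 * c * y * (1 - y) * (Real.exp (4 * c) - 1) := by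
    have h1y : 0 < 1 - y := by linarith
    have : 0 < Real.exp (4 * c) - 1 := by linarith
    positivity
  rw [div_lt_iff₀ hD]
  have key := key_ineq ha hb
  have hab : 4 * c * y + 4 * c * (1 - y) = 4 * c := by ring
  rw [hab] at key
  nlinarith [key, hc, mul_pos hc hc]
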